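/- Let H be a Hopf algebra with bijective antipode S and J a normalized twist for H. Define Δᴶ(a) = J⁻¹·Δ(a)·J and Sᴶ(a) = Q_J⁻¹·S(a)·Q_J for a ∈ H, where Q_J = Σ S(J⁽¹⁾)·J⁽²⁾. Then (H, same multiplication, Δᴶ, same counit ε, antipode Sᴶ) is a Hopf algebra. -/

import Mathlib

open TensorProduct

noncomputable section
variable (K B : Type*) [Field K] [Ring B] [Bialgebra K B]

/-- `ε ⊗ id : B ⊗ B → B`. -/
def epsId : B ⊗[K] B →ₐ[K] B :=
  (Algebra.TensorProduct.lid K B).toAlgHom.comp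
    (Algebra.TensorProduct.map (Bialgebra.counitAlgHom K B) (AlgHom.id K B))

/-- `id ⊗ ε : B ⊗ B → B`. -/
def idEps : B ⊗[K] B →ₐ[K] B :=
  (Algebra.TensorProduct.rid K K B).toAlgHom.comp
    (Algebra.TensorProduct.map (AlgHom.id K B) (Bialgebra.counitAlgHom K B))

/-- `Δ ⊗ id`, landing in `B ⊗ (B ⊗ B)`. -/
def comulId : B ⊗[K] B →ₐ[K] B ⊗[K] (B ⊗[K] B) :=
  (Algebra.TensorProduct.assoc K K K B B B).toAlgHom.comp
    (Algebra.TensorProduct.map (Bialgebra.comulAlgHom K B) (AlgHom.id K B))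

/-- `id ⊗ Δ`, landing in `B ⊗ (B ⊗ B)`. -/
def idComul : B ⊗[K] B →ₐ[K] B ⊗[K] (B ⊗[K] B) :=
  Algebra.TensorProduct.map (AlgHom.id K B) (Bialgebra.comulAlgHom K B)

/-- The cocycle condition `(Δ ⊗ id)(J)·(J ⊗ 1) = (id ⊗ Δ)(J)·(1 ⊗ J)` for a twist. -/
def IsTwist (J : B ⊗[K] B) : Prop :=
  comulId K B J * (Algebra.TensorProduct.assoc K K K B B B (J ⊗ₜ 1)) =
    idComul K B J * ((1 : B) ⊗ₜ J)

/-- Normalization `(ε ⊗ id)(J) = (id ⊗ ε)(J) = 1`. -/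
def IsNormalized (J : B ⊗[K] B) : Prop :=
  epsId K B J = 1 ∧ idEps K B J = 1

/-- The twisted comultiplication `a ↦ J⁻¹·Δ(a)·J` (with `J'` playing the role of `J⁻¹`). -/
def comulJ (J' J : B ⊗[K] B) : B →ₗ[K] B ⊗[K] B :=
  LinearMap.mulLeft K J' ∘ₗ LinearMap.mulRight K J ∘ₗ Coalgebra.comul

end

noncomputable section
variable (K B : Type*) [Field K] [Ring B] [HopfAlgebra K B]

/-- The antipode as a linear map. -/
def anti : B →ₗ[K] B := HopfAlgebra.antipode (R := K) (A := B)

/-- `Q_J = Σ S(J⁽¹⁾)·J⁽²⁾`. -/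
def QJ (J : B ⊗[K] B) : B := LinearMap.mul' K B ((anti K B).rTensor B J)

/-- `Σ J'⁽¹⁾·S(J'⁽²⁾)`; for `J' = J⁻¹` this is the inverse of `Q_J`. -/
def QJinv (J' : B ⊗[K] B) : B := LinearMap.mul' K B ((anti K B).lTensor B J')

/-- The twisted antipode `a ↦ Q_J⁻¹·S(a)·Q_J` (with `J'` playing the role of `J⁻¹`). -/
def antiJ (J' J : B ⊗[K] B) : B →ₗ[K] B :=
  LinearMap.mulLeft K (QJinv K B J') ∘ₗ LinearMap.mulRight K (QJ K B J) ∘ₗ anti K B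

end


section Aux
open Coalgebra
variable {K H : Type*} [Field K] [Ring H] [HopfAlgebra K H]


local notation "S" => HopfAlgebra.antipode (R := K) (A := H)

lemma sum_smul_counit (x : H) (rx : Coalgebra.Repr K x (H × H)) :
    ∑ i ∈ rx.index, Coalgebra.counit (R := K) (rx.right i) • rx.left i = x := by
  have h := Coalgebra.sum_tmul_counit_eq (R := K) rx
  have h2 := congrArg (TensorProduct.rid K H) h
  simp only [map_sum, TensorProduct.rid_tmul] at h2
  simpa using h2

lemma triple_collapse (x : H) (rx : Coalgebra.Repr K x (H × H))
    (rx1 : ∀ i : (H × H), Coalgebra.Repr K (rx.left i) (H × H)) :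
    ∑ i ∈ rx.index, ∑ k ∈ (rx1 i).index,
      (rx1 i).left k ⊗ₜ[K] ((rx1 i).right k * S (rx.right i)) = x ⊗ₜ[K] (1:H) := by
  classical
  set rx2 : ∀ i : (H × H), Coalgebra.Repr K (rx.right i) (H × H) := fun i => Coalgebra.Repr.arbitrary K _
  have h := Coalgebra.sum_tmul_tmul_eq (R := K) rx rx1 rx2
  have h2 := congrArg (LinearMap.lTensor H (LinearMap.mul' K H ∘ₗ LinearMap.lTensor H S)) h
  simp only [map_sum, LinearMap.lTensor_tmul, LinearMap.coe_comp, Function.comp_apply,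
    LinearMap.mul'_apply] at h2
  rw [h2]
  have : ∀ i ∈ rx.index, ∑ k ∈ (rx2 i).index,
      rx.left i ⊗ₜ[K] ((rx2 i).left k * S ((rx2 i).right k))
      = Coalgebra.counit (R := K) (rx.right i) • (rx.left i ⊗ₜ[K] (1:H)) := by
    intro i _
    rw [← TensorProduct.tmul_sum, HopfAlgebra.sum_mul_antipode_eq_algebraMap_counit (rx2 i),
      Algebra.algebraMap_eq_smul_one, TensorProduct.tmul_smul]
  rw [Finset.sum_congr rfl this]
  simp only [TensorProduct.smul_tmul']
  rw [← TensorProduct.sum_tmul, sum_smul_counit x rx]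

lemma sum_anti_mul_prod (x y : H) (rx : Coalgebra.Repr K x (H × H)) (ry : Coalgebra.Repr K y (H × H)) :
    ∑ k ∈ rx.index, ∑ l ∈ ry.index,
      S (rx.left k * ry.left l) * (rx.right k * ry.right l)
      = algebraMap K H (Coalgebra.counit x * Coalgebra.counit y) := by
  have hcm : Coalgebra.comul (R := K) (x*y)
      = ∑ k ∈ rx.index, ∑ l ∈ ry.index,
        (rx.left k * ry.left l) ⊗ₜ[K] (rx.right k * ry.right l) := by
    rw [Bialgebra.comul_mul, ← rx.eq, ← ry.eq, Finset.sum_mul_sum]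
    simp [Algebra.TensorProduct.tmul_mul_tmul]
  have h := HopfAlgebra.mul_antipode_rTensor_comul_apply (R := K) (a := x*y)
  rw [hcm] at h
  simpa [map_sum, Bialgebra.counit_mul] using h

lemma sum_counit_smul (x : H) (rx : Coalgebra.Repr K x (H × H)) :
    ∑ i ∈ rx.index, Coalgebra.counit (R := K) (rx.left i) • rx.right i = x := by
  have h := Coalgebra.sum_counit_tmul_eq (R := K) rx
  have h2 := congrArg (TensorProduct.lid K H) h
  simp only [map_sum, TensorProduct.lid_tmul] at h2
  simpa using h2

lemma alg_smul_aux (α β : K) (u v : H) : algebraMap K H (α*β) * u * v = (β • u) * (α • v) := by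
  simp [Algebra.smul_def, mul_assoc, map_mul]
  rw [← mul_assoc u, ← Algebra.commutes α u, mul_assoc, ← mul_assoc, ← Algebra.commutes β,
    mul_assoc]

lemma anti_mul' (a b : H) : S (a * b) = S b * S a := by
  classical
  set ra := Coalgebra.Repr.arbitrary K a with hra
  set rb := Coalgebra.Repr.arbitrary K b with hrb
  set ra1 : ∀ i : (H × H), Coalgebra.Repr K (ra.left i) (H × H) := fun i => Coalgebra.Repr.arbitrary K _
  set rb1 : ∀ j : (H × H), Coalgebra.Repr K (rb.left j) (H × H) := fun j => Coalgebra.Repr.arbitrary K _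
  -- the middle expression
  set M : H := ∑ i ∈ ra.index, ∑ j ∈ rb.index, ∑ k ∈ (ra1 i).index, ∑ l ∈ (rb1 j).index,
      S ((ra1 i).left k * (rb1 j).left l) * ((ra1 i).right k * (rb1 j).right l)
        * S (rb.right j) * S (ra.right i) with hM
  have claimA : M = S b * S a := by
    have step : ∀ i ∈ ra.index, ∀ j ∈ rb.index,
        (∑ k ∈ (ra1 i).index, ∑ l ∈ (rb1 j).index,
          S ((ra1 i).left k * (rb1 j).left l) * ((ra1 i).right k * (rb1 j).right l)
            * S (rb.right j) * S (ra.right i))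
        = (Coalgebra.counit (R := K) (rb.left j) • S (rb.right j)) *
            (Coalgebra.counit (R := K) (ra.left i) • S (ra.right i)) := by
      intro i _ j _
      rw [show (∑ k ∈ (ra1 i).index, ∑ l ∈ (rb1 j).index,
          S ((ra1 i).left k * (rb1 j).left l) * ((ra1 i).right k * (rb1 j).right l)
            * S (rb.right j) * S (ra.right i)) =
          (∑ k ∈ (ra1 i).index, ∑ l ∈ (rb1 j).index,
            S ((ra1 i).left k * (rb1 j).left l) * ((ra1 i).right k * (rb1 j).right l))
            * S (rb.right j) * S (ra.right i) by simp only [Finset.sum_mul]]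
      rw [sum_anti_mul_prod _ _ (ra1 i) (rb1 j), alg_smul_aux]
    calc M = ∑ i ∈ ra.index, ∑ j ∈ rb.index,
        (Coalgebra.counit (R := K) (rb.left j) • S (rb.right j)) *
          (Coalgebra.counit (R := K) (ra.left i) • S (ra.right i)) := by
          rw [hM]; exact Finset.sum_congr rfl fun i hi => Finset.sum_congr rfl fun j hj =>
            step i hi j hj
      _ = (∑ j ∈ rb.index, Coalgebra.counit (R := K) (rb.left j) • S (rb.right j)) *
          (∑ i ∈ ra.index, Coalgebra.counit (R := K) (ra.left i) • S (ra.right i)) := by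
          rw [Finset.sum_comm, Finset.sum_mul]
          exact Finset.sum_congr rfl fun j _ => by rw [Finset.mul_sum]
      _ = S b * S a := by
          rw [show (∑ j ∈ rb.index, Coalgebra.counit (R := K) (rb.left j) • S (rb.right j))
              = S (∑ j ∈ rb.index, Coalgebra.counit (R := K) (rb.left j) • rb.right j) by
                simp [map_sum, map_smul],
            show (∑ i ∈ ra.index, Coalgebra.counit (R := K) (ra.left i) • S (ra.right i))
              = S (∑ i ∈ ra.index, Coalgebra.counit (R := K) (ra.left i) • ra.right i) by
                simp [map_sum, map_smul],
            sum_counit_smul a ra, sum_counit_smul b rb]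
  have claimB : M = S (a * b) := by
    have hswap : M = ∑ i ∈ ra.index, ∑ k ∈ (ra1 i).index, ∑ j ∈ rb.index,
        ∑ l ∈ (rb1 j).index,
        S ((ra1 i).left k * (rb1 j).left l) * ((ra1 i).right k * (rb1 j).right l)
          * S (rb.right j) * S (ra.right i) := by
      rw [hM]; exact Finset.sum_congr rfl fun i _ => Finset.sum_comm
    have inner : ∀ i ∈ ra.index, ∀ k ∈ (ra1 i).index,
        (∑ j ∈ rb.index, ∑ l ∈ (rb1 j).index,
          S ((ra1 i).left k * (rb1 j).left l) * ((ra1 i).right k * (rb1 j).right l)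
            * S (rb.right j) * S (ra.right i))
        = S ((ra1 i).left k * b) * ((ra1 i).right k * S (ra.right i)) := by
      intro i _ k _
      set φ : H ⊗[K] H →ₗ[K] H := LinearMap.mul' K H ∘ₗ TensorProduct.map
        ((HopfAlgebra.antipode (R := K) (A := H)) ∘ₗ LinearMap.mulLeft K ((ra1 i).left k))
        (LinearMap.mulRight K (S (ra.right i)) ∘ₗ LinearMap.mulLeft K ((ra1 i).right k))
        with hphi
      have hterm : ∀ j ∈ rb.index, ∀ l ∈ (rb1 j).index,
          S ((ra1 i).left k * (rb1 j).left l) * ((ra1 i).right k * (rb1 j).right l)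
            * S (rb.right j) * S (ra.right i)
          = φ ((rb1 j).left l ⊗ₜ[K] ((rb1 j).right l * S (rb.right j))) := by
        intro j _ l _
        simp [hphi, LinearMap.mul'_apply, mul_assoc]
      rw [Finset.sum_congr rfl (fun j hj => Finset.sum_congr rfl (fun l hl => hterm j hj l hl))]
      rw [show (∑ j ∈ rb.index, ∑ l ∈ (rb1 j).index,
          φ ((rb1 j).left l ⊗ₜ[K] ((rb1 j).right l * S (rb.right j))))
          = φ (∑ j ∈ rb.index, ∑ l ∈ (rb1 j).index,
            (rb1 j).left l ⊗ₜ[K] ((rb1 j).right l * S (rb.right j))) by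
        simp [map_sum]]
      rw [triple_collapse b rb rb1]
      simp [hphi, LinearMap.mul'_apply, mul_assoc]
    rw [hswap, Finset.sum_congr rfl (fun i hi => Finset.sum_congr rfl
      (fun k hk => inner i hi k hk))]
    set ψ : H ⊗[K] H →ₗ[K] H := LinearMap.mul' K H ∘ₗ TensorProduct.map
      ((HopfAlgebra.antipode (R := K) (A := H)) ∘ₗ LinearMap.mulRight K b) LinearMap.id
      with hpsi
    rw [show (∑ i ∈ ra.index, ∑ k ∈ (ra1 i).index,
        S ((ra1 i).left k * b) * ((ra1 i).right k * S (ra.right i)))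
        = ψ (∑ i ∈ ra.index, ∑ k ∈ (ra1 i).index,
          (ra1 i).left k ⊗ₜ[K] ((ra1 i).right k * S (ra.right i))) by
      simp [hpsi, map_sum, LinearMap.mul'_apply]]
    rw [triple_collapse a ra ra1]
    simp [hpsi, LinearMap.mul'_apply]
  exact claimB.symm.trans claimA


lemma anti_one' : HopfAlgebra.antipode (R := K) (A := H) 1 = 1 := by
  have h := HopfAlgebra.mul_antipode_rTensor_comul_apply (R := K) (a := (1:H))
  simpa [Algebra.TensorProduct.one_def] using h

lemma anti_apply (x : H) : anti K H x = HopfAlgebra.antipode (R := K) x := rfl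

lemma anti_mul_rev (x y : H) : anti K H (x * y) = anti K H y * anti K H x := anti_mul' x y

/-- `Q` as a linear map. -/
noncomputable def Qlin (K H : Type*) [Field K] [Ring H] [HopfAlgebra K H] :
    H ⊗[K] H →ₗ[K] H := LinearMap.mul' K H ∘ₗ (anti K H).rTensor H

/-- `P` as a linear map. -/
noncomputable def Plin (K H : Type*) [Field K] [Ring H] [HopfAlgebra K H] :
    H ⊗[K] H →ₗ[K] H := LinearMap.mul' K H ∘ₗ (anti K H).lTensor H

@[simp] lemma Qlin_tmul (u v : H) : Qlin K H (u ⊗ₜ[K] v) = anti K H u * v := rfl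

@[simp] lemma Plin_tmul (u v : H) : Plin K H (u ⊗ₜ[K] v) = u * anti K H v := rfl

lemma QJ_eq (x : H ⊗[K] H) : QJ K H x = Qlin K H x := rfl
lemma QJinv_eq (x : H ⊗[K] H) : QJinv K H x = Plin K H x := rfl

lemma Qlin_comul (a : H) :
    Qlin K H (Coalgebra.comul a) = algebraMap K H (Coalgebra.counit a) :=
  HopfAlgebra.mul_antipode_rTensor_comul_apply (R := K) (a := a)

lemma Plin_comul (a : H) :
    Plin K H (Coalgebra.comul a) = algebraMap K H (Coalgebra.counit a) :=
  HopfAlgebra.mul_antipode_lTensor_comul_apply (R := K) (a := a)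

lemma alg_mid (α : K) (u v : H) : u * algebraMap K H α * v = α • (u * v) := by
  rw [← Algebra.commutes α u, mul_assoc, ← Algebra.smul_def]

lemma K1' (z : H ⊗[K] H) (u v : H) :
    Qlin K H (z * (u ⊗ₜ[K] v)) = anti K H u * Qlin K H z * v := by
  induction z using TensorProduct.induction_on with
  | zero => simp
  | tmul x y =>
      simp [Algebra.TensorProduct.tmul_mul_tmul, anti_mul_rev, mul_assoc]
  | add x y hx hy => simp [add_mul, hx, hy, mul_add]

lemma K2' (z : H ⊗[K] H) (u v : H) :
    Plin K H ((u ⊗ₜ[K] v) * z) = u * Plin K H z * anti K H v := by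
  induction z using TensorProduct.induction_on with
  | zero => simp
  | tmul x y =>
      simp [Algebra.TensorProduct.tmul_mul_tmul, anti_mul_rev, mul_assoc]
  | add x y hx hy => simp [mul_add, hx, hy, add_mul]

lemma K1 (a : H) (x : H ⊗[K] H) :
    Qlin K H (Coalgebra.comul a * x) = Coalgebra.counit (R := K) a • Qlin K H x := by
  induction x using TensorProduct.induction_on with
  | zero => simp
  | tmul u v => rw [K1', Qlin_comul, alg_mid]; simp
  | add x y hx hy => simp [mul_add, hx, hy]

lemma K2 (a : H) (x : H ⊗[K] H) :
    Plin K H (x * Coalgebra.comul a) = Coalgebra.counit (R := K) a • Plin K H x := by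
  induction x using TensorProduct.induction_on with
  | zero => simp
  | tmul u v => rw [K2', Plin_comul, alg_mid]; simp [mul_comm]
  | add x y hx hy => simp [add_mul, hx, hy]

end Aux

section Twist
open Coalgebra
variable {K H : Type*} [Field K] [Ring H] [HopfAlgebra K H]

lemma comulJ_apply (J' J : H ⊗[K] H) (a : H) :
    comulJ K H J' J a = J' * (Coalgebra.comul a * J) := rfl

/-- conjugation by a unit, as an algebra hom -/
noncomputable def conjAlg {A : Type*} [Ring A] [Algebra K A] (u v : A)
    (huv : u * v = 1) (hvu : v * u = 1) : A →ₐ[K] A where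
  toFun x := v * (x * u)
  map_one' := by show v * (1 * u) = 1; rw [one_mul, hvu]
  map_mul' x y := by
    simp only [mul_assoc]
    rw [show u * (v * (y * u)) = y * u by rw [← mul_assoc, huv, one_mul]]
  map_zero' := by simp
  map_add' x y := by simp [add_mul, mul_add]
  commutes' r := by
    show v * (algebraMap K A r * u) = algebraMap K A r
    rw [Algebra.commutes r u, ← mul_assoc, hvu, one_mul]

variable (J' J : H ⊗[K] H)

/-- The twisted comultiplication as an algebra hom. -/
noncomputable def DJalg (hJ : J * J' = 1) (hJ' : J' * J = 1) : H →ₐ[K] H ⊗[K] H :=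
  (conjAlg J J' hJ hJ').comp (Bialgebra.comulAlgHom K H)

variable (hJ : J * J' = 1) (hJ' : J' * J = 1)

lemma DJalg_apply (a : H) : DJalg J' J hJ hJ' a = J' * (Coalgebra.comul a * J) := rfl

lemma comulJ_eq_DJalg : comulJ K H J' J = (DJalg J' J hJ hJ').toLinearMap := by
  ext a; rfl

/-- `x ↦ assoc (x ⊗ 1)` as an algebra hom. -/
noncomputable def e12 : H ⊗[K] H →ₐ[K] H ⊗[K] (H ⊗[K] H) :=
  ((Algebra.TensorProduct.assoc K K K H H H).toAlgHom.comp Algebra.TensorProduct.includeLeft)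

/-- `x ↦ 1 ⊗ x` as an algebra hom. -/
noncomputable def e23 : H ⊗[K] H →ₐ[K] H ⊗[K] (H ⊗[K] H) :=
  Algebra.TensorProduct.includeRight

lemma e12_apply (x : H ⊗[K] H) :
    e12 x = Algebra.TensorProduct.assoc K K K H H H (x ⊗ₜ[K] (1:H)) := rfl

lemma e23_apply (x : H ⊗[K] H) : e23 x = (1:H) ⊗ₜ[K] x := rfl

lemma cocycle (hc : IsTwist K H J) :
    comulId K H J * e12 J = idComul K H J * e23 J := hc

lemma algAssoc_coe (x : (H ⊗[K] H) ⊗[K] H) :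
    Algebra.TensorProduct.assoc K K K H H H x = TensorProduct.assoc K H H H x := rfl

lemma comulId_comul_eq_idComul_comul (a : H) :
    comulId K H (Coalgebra.comul a) = idComul K H (Coalgebra.comul a) := by
  have h := Coalgebra.coassoc_apply (R := K) a
  have h1 : comulId K H (Coalgebra.comul a)
      = TensorProduct.assoc K H H H
        ((Coalgebra.comul (R := K) (A := H)).rTensor H (Coalgebra.comul a)) := rfl
  have h2 : idComul K H (Coalgebra.comul a)
      = (Coalgebra.comul (R := K) (A := H)).lTensor H (Coalgebra.comul a) := rfl
  rw [h1, h2, h]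

lemma Phi_eq (x : H ⊗[K] H) :
    Algebra.TensorProduct.assoc K K K H H H
      (Algebra.TensorProduct.map (DJalg J' J hJ hJ') (AlgHom.id K H) x)
    = e12 J' * comulId K H x * e12 J := by
  induction x using TensorProduct.induction_on with
  | zero => simp
  | tmul u v =>
      have h1 : (DJalg J' J hJ hJ' u) ⊗ₜ[K] v
          = (J' ⊗ₜ[K] (1:H)) * ((Bialgebra.comulAlgHom K H u) ⊗ₜ[K] v) * (J ⊗ₜ[K] (1:H)) := by
        rw [DJalg_apply]
        simp only [Algebra.TensorProduct.tmul_mul_tmul, one_mul, mul_one, mul_assoc,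
          Bialgebra.comulAlgHom_apply]
      rw [show Algebra.TensorProduct.map (DJalg J' J hJ hJ') (AlgHom.id K H) (u ⊗ₜ[K] v)
          = (DJalg J' J hJ hJ' u) ⊗ₜ[K] v from rfl, h1, map_mul, map_mul]
      rfl
  | add x y hx hy => simp only [map_add, hx, hy, mul_add, add_mul]

lemma Psi_eq (x : H ⊗[K] H) :
    Algebra.TensorProduct.map (AlgHom.id K H) (DJalg J' J hJ hJ') x
    = e23 J' * idComul K H x * e23 J := by
  induction x using TensorProduct.induction_on with
  | zero => simp
  | tmul u v =>
      have h1 : u ⊗ₜ[K] (DJalg J' J hJ hJ' v)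
          = ((1:H) ⊗ₜ[K] J') * (u ⊗ₜ[K] (Bialgebra.comulAlgHom K H v)) * ((1:H) ⊗ₜ[K] J) := by
        rw [DJalg_apply]
        simp only [Algebra.TensorProduct.tmul_mul_tmul, one_mul, mul_one, mul_assoc,
          Bialgebra.comulAlgHom_apply]
      rw [show Algebra.TensorProduct.map (AlgHom.id K H) (DJalg J' J hJ hJ') (u ⊗ₜ[K] v)
          = u ⊗ₜ[K] (DJalg J' J hJ hJ' v) from rfl, h1]
      rfl
  | add x y hx hy => simp only [map_add, hx, hy, mul_add, add_mul]

lemma invY (hJ : J * J' = 1) (hJ' : J' * J = 1) (hc : IsTwist K H J) :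
    e12 J' * comulId K H J' = e23 J' * idComul K H J' := by
  have hY1X : (e12 J' * comulId K H J') * (comulId K H J * e12 J) = 1 := by
    calc (e12 J' * comulId K H J') * (comulId K H J * e12 J)
        = e12 J' * (comulId K H J' * comulId K H J) * e12 J := by
          simp only [mul_assoc]
      _ = 1 := by
          rw [← map_mul, hJ', map_one, mul_one, ← map_mul, hJ', map_one]
  have hXY2 : (comulId K H J * e12 J) * (e23 J' * idComul K H J') = 1 := by
    rw [cocycle J hc]
    calc (idComul K H J * e23 J) * (e23 J' * idComul K H J')
        = idComul K H J * (e23 J * e23 J') * idComul K H J' := by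
          simp only [mul_assoc]
      _ = 1 := by
          rw [← map_mul, hJ, map_one, mul_one, ← map_mul, hJ, map_one]
  calc e12 J' * comulId K H J'
      = (e12 J' * comulId K H J') *
          ((comulId K H J * e12 J) * (e23 J' * idComul K H J')) := by rw [hXY2, mul_one]
    _ = ((e12 J' * comulId K H J') * (comulId K H J * e12 J)) *
          (e23 J' * idComul K H J') := by simp only [mul_assoc]
    _ = e23 J' * idComul K H J' := by rw [hY1X, one_mul]

lemma part2 (hJ : J * J' = 1) (hJ' : J' * J = 1) (hc : IsTwist K H J) (a : H) :
    Algebra.TensorProduct.assoc K K K H H H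
      ((comulJ K H J' J).rTensor H (comulJ K H J' J a))
    = (comulJ K H J' J).lTensor H (comulJ K H J' J a) := by
  have hr : (comulJ K H J' J).rTensor H (comulJ K H J' J a)
      = Algebra.TensorProduct.map (DJalg J' J hJ hJ') (AlgHom.id K H) (comulJ K H J' J a) := by
    rw [comulJ_eq_DJalg J' J hJ hJ']
    exact congrFun (congrArg _ (TensorProduct.ext' fun x y => rfl)) _
  have hl : (comulJ K H J' J).lTensor H (comulJ K H J' J a)
      = Algebra.TensorProduct.map (AlgHom.id K H) (DJalg J' J hJ hJ') (comulJ K H J' J a) := by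
    rw [comulJ_eq_DJalg J' J hJ hJ']
    exact congrFun (congrArg _ (TensorProduct.ext' fun x y => rfl)) _
  rw [hr, hl, Phi_eq J' J hJ hJ', Psi_eq J' J hJ hJ']
  have hD : comulJ K H J' J a = J' * (Coalgebra.comul a * J) := rfl
  rw [hD, map_mul, map_mul, map_mul, map_mul]
  calc e12 J' * (comulId K H J' * (comulId K H (Coalgebra.comul a) * comulId K H J)) * e12 J
      = (e12 J' * comulId K H J') * comulId K H (Coalgebra.comul a)
          * (comulId K H J * e12 J) := by simp only [mul_assoc]
    _ = (e23 J' * idComul K H J') * idComul K H (Coalgebra.comul a)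
          * (idComul K H J * e23 J) := by
        rw [invY J' J hJ hJ' hc, comulId_comul_eq_idComul_comul, cocycle J hc]
    _ = e23 J' * (idComul K H J' * (idComul K H (Coalgebra.comul a) * idComul K H J)) * e23 J := by
        simp only [mul_assoc]

lemma part1_mul (hJ : J * J' = 1) (a b : H) :
    comulJ K H J' J (a * b) = comulJ K H J' J a * comulJ K H J' J b := by
  simp only [comulJ_apply, Bialgebra.comul_mul]
  calc J' * (Coalgebra.comul a * Coalgebra.comul b * J)
      = J' * (Coalgebra.comul (R := K) a * ((J * J') * (Coalgebra.comul b * J))) := by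
        rw [hJ]; simp only [one_mul, mul_assoc]
    _ = (J' * (Coalgebra.comul a * J)) * (J' * (Coalgebra.comul b * J)) := by
        simp only [mul_assoc]

lemma part1_one (hJ' : J' * J = 1) : comulJ K H J' J 1 = 1 := by
  rw [comulJ_apply, Bialgebra.comul_one, one_mul, hJ']

lemma epsId_comul (a : H) : epsId K H (Coalgebra.comul a) = a := by
  calc epsId K H (Coalgebra.comul a)
      = TensorProduct.lid K H
          ((Coalgebra.counit (R := K) (A := H)).rTensor H (Coalgebra.comul a)) := rfl
    _ = a := by rw [Coalgebra.rTensor_counit_comul]; simp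

lemma idEps_comul (a : H) : idEps K H (Coalgebra.comul a) = a := by
  calc idEps K H (Coalgebra.comul a)
      = Algebra.TensorProduct.rid K K H
          ((Coalgebra.counit (R := K) (A := H)).lTensor H (Coalgebra.comul a)) := rfl
    _ = a := by rw [Coalgebra.lTensor_counit_comul]; simp

lemma epsId_J' (hJ' : J' * J = 1) (hn : IsNormalized K H J) : epsId K H J' = 1 := by
  have h := congrArg (epsId K H) hJ'
  rw [map_mul, hn.1, mul_one, map_one] at h
  exact h

lemma idEps_J' (hJ' : J' * J = 1) (hn : IsNormalized K H J) : idEps K H J' = 1 := by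
  have h := congrArg (idEps K H) hJ'
  rw [map_mul, hn.2, mul_one, map_one] at h
  exact h

lemma part3a (hJ' : J' * J = 1) (hn : IsNormalized K H J) (a : H) :
    epsId K H (comulJ K H J' J a) = a := by
  rw [comulJ_apply, map_mul, map_mul, epsId_J' J' J hJ' hn, hn.1, epsId_comul, one_mul, mul_one]

lemma part3b (hJ' : J' * J = 1) (hn : IsNormalized K H J) (a : H) :
    idEps K H (comulJ K H J' J a) = a := by
  rw [comulJ_apply, map_mul, map_mul, idEps_J' J' J hJ' hn, hn.2, idEps_comul, one_mul, mul_one]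

end Twist

section Part4
open Coalgebra
variable {K H : Type*} [Field K] [Ring H] [HopfAlgebra K H]

/-- The map `x ⊗ (y ⊗ z) ↦ x S(y) z`. -/
noncomputable def gmap (K H : Type*) [Field K] [Ring H] [HopfAlgebra K H] :
    H ⊗[K] (H ⊗[K] H) →ₗ[K] H := LinearMap.mul' K H ∘ₗ LinearMap.lTensor H (Qlin K H)

@[simp] lemma gmap_tmul (x : H) (w : H ⊗[K] H) : gmap K H (x ⊗ₜ[K] w) = x * Qlin K H w := rfl

variable (J' J : H ⊗[K] H)

lemma s3 (z w : H ⊗[K] H) : gmap K H (e23 z * e12 w) = Plin K H w * Qlin K H z := by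
  induction w using TensorProduct.induction_on with
  | zero => simp
  | tmul c d =>
      induction z using TensorProduct.induction_on with
      | zero => simp
      | tmul a b =>
          have h1 : e23 (a ⊗ₜ[K] b) * e12 (c ⊗ₜ[K] d)
              = c ⊗ₜ[K] ((a * d) ⊗ₜ[K] b) := by
            rw [e23_apply, e12_apply]
            simp [Algebra.TensorProduct.assoc_tmul, Algebra.TensorProduct.tmul_mul_tmul]
          rw [h1]
          simp [anti_mul_rev, mul_assoc]
      | add x y hx hy => simp only [map_add, add_mul, mul_add, hx, hy]
  | add x y hx hy => simp only [map_add, add_mul, mul_add, hx, hy]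

lemma E1 (c b : H) (z w : H ⊗[K] H) :
    gmap K H ((c ⊗ₜ[K] z) * Algebra.TensorProduct.assoc K K K H H H (w ⊗ₜ[K] b))
    = c * Plin K H w * (Qlin K H z * b) := by
  induction w using TensorProduct.induction_on with
  | zero => simp
  | tmul x y =>
      induction z using TensorProduct.induction_on with
      | zero => simp
      | tmul u v =>
          have h1 : (c ⊗ₜ[K] (u ⊗ₜ[K] v))
                * Algebra.TensorProduct.assoc K K K H H H ((x ⊗ₜ[K] y) ⊗ₜ[K] b)
              = (c * x) ⊗ₜ[K] ((u * y) ⊗ₜ[K] (v * b)) := by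
            simp [Algebra.TensorProduct.assoc_tmul, Algebra.TensorProduct.tmul_mul_tmul]
          rw [h1]
          simp [anti_mul_rev, mul_assoc]
      | add p q hp hq =>
          simp only [TensorProduct.tmul_add, TensorProduct.add_tmul, map_add, add_mul,
            mul_add, hp, hq]
  | add p q hp hq =>
      simp only [TensorProduct.tmul_add, TensorProduct.add_tmul, map_add, add_mul,
        mul_add, hp, hq]

lemma s4 (z w : H ⊗[K] H) :
    gmap K H (idComul K H z * comulId K H w) = idEps K H z * epsId K H w := by
  induction z using TensorProduct.induction_on with
  | zero => simp
  | tmul c d =>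
      induction w using TensorProduct.induction_on with
      | zero => simp
      | tmul a b =>
          have h1 : idComul K H (c ⊗ₜ[K] d) = c ⊗ₜ[K] (Coalgebra.comul d) := rfl
          have h2 : comulId K H (a ⊗ₜ[K] b)
              = Algebra.TensorProduct.assoc K K K H H H ((Coalgebra.comul a) ⊗ₜ[K] b) := rfl
          have h3 : idEps K H (c ⊗ₜ[K] d) = Coalgebra.counit (R := K) d • c := by
            calc idEps K H (c ⊗ₜ[K] d)
                = Algebra.TensorProduct.rid K K H (c ⊗ₜ[K] (Coalgebra.counit (R := K) d)) := rfl
              _ = Coalgebra.counit (R := K) d • c := by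
                  rw [Algebra.TensorProduct.rid_tmul]
          have h4 : epsId K H (a ⊗ₜ[K] b) = Coalgebra.counit (R := K) a • b := by
            calc epsId K H (a ⊗ₜ[K] b)
                = TensorProduct.lid K H ((Coalgebra.counit (R := K) a) ⊗ₜ[K] b) := rfl
              _ = Coalgebra.counit (R := K) a • b := by rw [TensorProduct.lid_tmul]
          rw [h1, h2, E1, Plin_comul, Qlin_comul, h3, h4, alg_mid]
          rw [show algebraMap K H (Coalgebra.counit (R := K) d) * b
              = Coalgebra.counit (R := K) d • b from (Algebra.smul_def _ _).symm]
          rw [mul_smul_comm, smul_mul_assoc, mul_smul_comm, smul_smul, smul_smul, mul_comm]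
      | add p q hp hq => simp only [map_add, add_mul, mul_add, hp, hq]
  | add p q hp hq => simp only [map_add, add_mul, mul_add, hp, hq]

lemma s1 (hJ : J * J' = 1) (hJ' : J' * J = 1) (hc : IsTwist K H J) :
    e23 J * e12 J' = idComul K H J' * comulId K H J := by
  have h1 : idComul K H J' * (comulId K H J * e12 J) = e23 J := by
    rw [cocycle J hc, ← mul_assoc, ← map_mul, hJ', map_one, one_mul]
  calc e23 J * e12 J'
      = idComul K H J' * (comulId K H J * e12 J) * e12 J' := by rw [h1]
    _ = idComul K H J' * comulId K H J * (e12 J * e12 J') := by simp only [mul_assoc]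
    _ = idComul K H J' * comulId K H J := by rw [← map_mul, hJ, map_one, mul_one]

lemma WQ (hJ : J * J' = 1) (hJ' : J' * J = 1) (hc : IsTwist K H J)
    (hn : IsNormalized K H J) : Plin K H J' * Qlin K H J = 1 := by
  rw [← s3 J J', s1 J' J hJ hJ' hc, s4, idEps_J' J' J hJ' hn, hn.1, one_mul]

lemma part4r (hJ : J * J' = 1) (hJ' : J' * J = 1) (hc : IsTwist K H J)
    (hn : IsNormalized K H J) (a : H) :
    LinearMap.mul' K H ((antiJ K H J' J).rTensor H (comulJ K H J' J a)) =
      algebraMap K H (Bialgebra.counitAlgHom K H a) := by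
  have GR : ∀ u : H ⊗[K] H,
      LinearMap.mul' K H ((antiJ K H J' J).rTensor H u) = Plin K H J' * Qlin K H (J * u) := by
    intro u
    induction u using TensorProduct.induction_on with
    | zero => simp
    | tmul x y =>
        rw [K1']
        have h1 : LinearMap.mul' K H ((antiJ K H J' J).rTensor H (x ⊗ₜ[K] y))
            = (Plin K H J' * (anti K H x * Qlin K H J)) * y := rfl
        rw [h1]
        simp only [mul_assoc]
    | add p q hp hq => simp only [map_add, mul_add, hp, hq]
  rw [GR, comulJ_apply, show J * (J' * (Coalgebra.comul a * J)) = Coalgebra.comul a * J by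
    rw [← mul_assoc, hJ, one_mul], K1, mul_smul_comm, WQ J' J hJ hJ' hc hn,
    Bialgebra.counitAlgHom_apply, Algebra.algebraMap_eq_smul_one]

lemma part4l (hJ : J * J' = 1) (hJ' : J' * J = 1) (hc : IsTwist K H J)
    (hn : IsNormalized K H J) (a : H) :
    LinearMap.mul' K H ((antiJ K H J' J).lTensor H (comulJ K H J' J a)) =
      algebraMap K H (Bialgebra.counitAlgHom K H a) := by
  have hGL : ∀ u : H ⊗[K] H,
      LinearMap.mul' K H ((antiJ K H J' J).lTensor H u) = Plin K H (u * J') * Qlin K H J := by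
    intro u
    induction u using TensorProduct.induction_on with
    | zero => simp
    | tmul x y =>
        rw [K2']
        have h1 : LinearMap.mul' K H ((antiJ K H J' J).lTensor H (x ⊗ₜ[K] y))
            = x * (Plin K H J' * (anti K H y * Qlin K H J)) := rfl
        rw [h1]
        simp only [mul_assoc]
    | add p q hp hq => simp only [map_add, add_mul, hp, hq]
  rw [hGL, comulJ_apply, show (J' * (Coalgebra.comul a * J)) * J' = J' * Coalgebra.comul a by
    simp only [mul_assoc]; rw [hJ, mul_one], K2, smul_mul_assoc,
    WQ J' J hJ hJ' hc hn, Bialgebra.counitAlgHom_apply, Algebra.algebraMap_eq_smul_one]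

end Part4
variable {K H : Type*} [Field K] [Ring H] [HopfAlgebra K H]

theorem twisted_hopf_algebra (hS : Function.Bijective (anti K H))
    (J J' : H ⊗[K] H)
    (hJ : J * J' = 1) (hJ' : J' * J = 1) (hc : IsTwist K H J) (hn : IsNormalized K H J) :
    -- `Δᴶ` is a unital algebra homomorphism
    ((∀ a b : H, comulJ K H J' J (a * b) = comulJ K H J' J a * comulJ K H J' J b) ∧
      comulJ K H J' J 1 = 1) ∧
    -- coassociativity of `Δᴶ`
    (∀ a : H, Algebra.TensorProduct.assoc K K K H H H
        ((comulJ K H J' J).rTensor H (comulJ K H J' J a)) =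
      (comulJ K H J' J).lTensor H (comulJ K H J' J a)) ∧
    -- the counit laws for `ε` with respect to `Δᴶ`
    (∀ a : H, epsId K H (comulJ K H J' J a) = a ∧ idEps K H (comulJ K H J' J a) = a) ∧
    -- the antipode laws for `Sᴶ`
    (∀ a : H,
      LinearMap.mul' K H ((antiJ K H J' J).rTensor H (comulJ K H J' J a)) =
        algebraMap K H (Bialgebra.counitAlgHom K H a) ∧
      LinearMap.mul' K H ((antiJ K H J' J).lTensor H (comulJ K H J' J a)) =
        algebraMap K H (Bialgebra.counitAlgHom K H a)) := by
  refine ⟨⟨part1_mul J' J hJ, part1_one J' J hJ'⟩,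
    fun a => part2 J' J hJ hJ' hc a,
    fun a => ⟨part3a J' J hJ' hn a, part3b J' J hJ' hn a⟩,
    fun a => ⟨part4r J' J hJ hJ' hc hn a, part4l J' J hJ hJ' hc hn a⟩⟩
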